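/- arXiv:1502.06500 — 3 statements merged into one kernel-verified Lean document; each statement's English description precedes it below -/
import Mathlib

section
/- For the monic Freud polynomials P_n orthogonal with respect to the weight e^{-x^4} on ℝ, satisfying xP_n = P_{n+1} + c_n P_{n-1} with P_0 = 1, P_1 = x, the recurrence coefficients satisfy the string equation n = 4 c_n (c_{n+1} + c_n + c_{n-1}) for all n ≥ 1, with c_0 = 0 and c_1 = Γ(3/4)/Γ(1/4). -/
open Polynomial MeasureTheory Filter Topology

lemma freud_exp_bound (x : ℝ) : Real.exp (-x^4) ≤ Real.exp 1 * Real.exp (-x^2) := by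
  rw [← Real.exp_add]
  apply Real.exp_le_exp.2
  nlinarith [sq_nonneg (x^2 - 1)]

lemma freud_integrable_pow (i : ℕ) : Integrable fun x : ℝ => x ^ i * Real.exp (-x ^ 4) := by
  have hg : Integrable fun x : ℝ => Real.exp 1 * |x ^ i * Real.exp (-x ^ 2)| := by
    have := (integrable_rpow_mul_exp_neg_mul_sq (b := 1) one_pos
      (s := (i : ℝ)) (lt_of_lt_of_le neg_one_lt_zero (Nat.cast_nonneg i))).abs.const_mul
      (Real.exp 1)
    refine this.congr (Eventually.of_forall fun x => ?_)
    simp [Real.rpow_natCast]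
  refine hg.mono' (Continuous.aestronglyMeasurable (by continuity)) ?_
  refine Eventually.of_forall fun x => ?_
  rw [Real.norm_eq_abs, abs_mul, abs_mul, abs_of_nonneg (Real.exp_pos _).le,
    abs_of_nonneg (Real.exp_pos _).le]
  calc |x ^ i| * Real.exp (-x ^ 4) ≤ |x ^ i| * (Real.exp 1 * Real.exp (-x ^ 2)) :=
        mul_le_mul_of_nonneg_left (freud_exp_bound x) (abs_nonneg _)
    _ = Real.exp 1 * (|x ^ i| * Real.exp (-x ^ 2)) := by ring

lemma freud_integrable (Q : Polynomial ℝ) :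
    Integrable fun x : ℝ => Q.eval x * Real.exp (-x ^ 4) := by
  have : (fun x : ℝ => Q.eval x * Real.exp (-x ^ 4)) = fun x : ℝ =>
      ∑ i ∈ Finset.range (Q.natDegree + 1), Q.coeff i * x ^ i * Real.exp (-x ^ 4) := by
    funext x
    rw [Polynomial.eval_eq_sum_range, Finset.sum_mul]
  rw [this]
  refine integrable_finset_sum _ fun i _ => ?_
  simpa [mul_assoc] using (freud_integrable_pow i).const_mul (Q.coeff i)

/-- The Freud moment functional as a linear map. -/
noncomputable def freudIF : Polynomial ℝ →ₗ[ℝ] ℝ where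
  toFun Q := ∫ x : ℝ, Q.eval x * Real.exp (-x ^ 4)
  map_add' p q := by
    simp only [eval_add, add_mul]
    exact integral_add (freud_integrable p) (freud_integrable q)
  map_smul' a p := by
    simp only [eval_smul, smul_eq_mul, RingHom.id_apply, mul_assoc]
    exact MeasureTheory.integral_const_mul a _

lemma freudIF_apply (Q : Polynomial ℝ) :
    freudIF Q = ∫ x : ℝ, Q.eval x * Real.exp (-x ^ 4) := rfl

lemma freud_C_mul (a : ℝ) (p : Polynomial ℝ) : freudIF (C a * p) = a * freudIF p := by
  rw [← smul_eq_C_mul, _root_.map_smul, smul_eq_mul]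

lemma freud_tendsto_pow_atTop (i : ℕ) :
    Tendsto (fun x : ℝ => x ^ i * Real.exp (-x ^ 4)) atTop (𝓝 0) := by
  have h1 : Tendsto (fun x : ℝ => (x ^ 4) ^ (i + 1) * Real.exp (-x ^ 4)) atTop (𝓝 0) :=
    (Real.tendsto_pow_mul_exp_neg_atTop_nhds_zero (i + 1)).comp
      (tendsto_pow_atTop (by norm_num : (4 : ℕ) ≠ 0))
  refine squeeze_zero' ?_ ?_ h1
  · filter_upwards [eventually_ge_atTop (0 : ℝ)] with x hx
    positivity
  · filter_upwards [eventually_ge_atTop (1 : ℝ)] with x hx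
    have : x ^ i ≤ (x ^ 4) ^ (i + 1) := by
      rw [← pow_mul]
      exact pow_le_pow_right₀ hx (by nlinarith)
    exact mul_le_mul_of_nonneg_right this (Real.exp_pos _).le

lemma freud_tendsto_atTop (Q : Polynomial ℝ) :
    Tendsto (fun x : ℝ => Q.eval x * Real.exp (-x ^ 4)) atTop (𝓝 0) := by
  have : (fun x : ℝ => Q.eval x * Real.exp (-x ^ 4)) = fun x : ℝ =>
      ∑ i ∈ Finset.range (Q.natDegree + 1), Q.coeff i * (x ^ i * Real.exp (-x ^ 4)) := by
    funext x
    rw [Polynomial.eval_eq_sum_range, Finset.sum_mul]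
    simp [mul_assoc]
  rw [this]
  have := tendsto_finset_sum (Finset.range (Q.natDegree + 1))
    (fun i _ => (freud_tendsto_pow_atTop i).const_mul (Q.coeff i))
  simpa using this

lemma freud_tendsto_atBot (Q : Polynomial ℝ) :
    Tendsto (fun x : ℝ => Q.eval x * Real.exp (-x ^ 4)) atBot (𝓝 0) := by
  have h := (freud_tendsto_atTop (Q.comp (-X))).comp tendsto_neg_atBot_atTop
  refine h.congr fun x => ?_
  have h4 : (-x) ^ 4 = x ^ 4 := by ring
  simp [Function.comp, eval_comp, h4]

lemma freud_hasDerivAt (Q : Polynomial ℝ) (x : ℝ) :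
    HasDerivAt (fun y : ℝ => Q.eval y * Real.exp (-y ^ 4))
      ((derivative Q - C 4 * X ^ 3 * Q).eval x * Real.exp (-x ^ 4)) x := by
  have hexp : HasDerivAt (fun y : ℝ => Real.exp (-y ^ 4))
      (Real.exp (-x ^ 4) * -(4 * x ^ 3)) x := by
    have := ((hasDerivAt_pow 4 x).neg).exp
    simpa using this
  have := (Q.hasDerivAt x).mul hexp
  change HasDerivAt (fun y : ℝ => Q.eval y * Real.exp (-y ^ 4)) _ x at this
  convert this using 1
  simp only [eval_sub, eval_mul, eval_pow, eval_C, eval_X, sub_mul]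
  ring

lemma freud_integral_deriv (Q : Polynomial ℝ) :
    ∫ x : ℝ, (derivative Q - C 4 * X ^ 3 * Q).eval x * Real.exp (-x ^ 4) = 0 := by
  set D := derivative Q - C 4 * X ^ 3 * Q with hD
  have hint := freud_integrable D
  have h1 : ∫ x in Set.Iic (0 : ℝ), D.eval x * Real.exp (-x ^ 4)
      = Q.eval 0 * Real.exp (-(0:ℝ) ^ 4) - 0 := by
    refine integral_Iic_of_hasDerivAt_of_tendsto' (fun x _ => freud_hasDerivAt Q x)
      hint.integrableOn (freud_tendsto_atBot Q)
  have h2 : ∫ x in Set.Ioi (0 : ℝ), D.eval x * Real.exp (-x ^ 4)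
      = 0 - Q.eval 0 * Real.exp (-(0:ℝ) ^ 4) := by
    refine integral_Ioi_of_hasDerivAt_of_tendsto' (fun x _ => freud_hasDerivAt Q x)
      hint.integrableOn (freud_tendsto_atTop Q)
  rw [← intervalIntegral.integral_Iic_add_Ioi (b := (0:ℝ)) hint.integrableOn hint.integrableOn,
    h1, h2]
  ring

lemma freud_IBP (Q : Polynomial ℝ) :
    freudIF (derivative Q) = 4 * freudIF (X ^ 3 * Q) := by
  have h0 : freudIF (derivative Q - C 4 * X ^ 3 * Q) = 0 := freud_integral_deriv Q
  rw [map_sub, mul_assoc, freud_C_mul] at h0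
  linarith

lemma freud_rpow4 (x : ℝ) : x ^ (4:ℝ) = x ^ (4:ℕ) := by
  rw [show (4:ℝ) = ((4:ℕ):ℝ) by norm_num, Real.rpow_natCast]

lemma freud_moment0 : ∫ x : ℝ, Real.exp (-x ^ 4) = Real.Gamma (1 / 4) / 2 := by
  have habs : ∫ x : ℝ, Real.exp (-x ^ 4) = ∫ x : ℝ, Real.exp (-|x| ^ 4) := by
    congr 1; funext x; rw [← abs_pow, abs_of_nonneg (by positivity : (0:ℝ) ≤ x ^ 4)]
  rw [habs, integral_comp_abs (f := fun x => Real.exp (-x ^ 4))]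
  have : ∫ x in Set.Ioi (0:ℝ), Real.exp (-x ^ 4)
      = ∫ x in Set.Ioi (0:ℝ), x ^ (0:ℝ) * Real.exp (-x ^ (4:ℝ)) := by
    refine setIntegral_congr_fun measurableSet_Ioi fun x hx => ?_
    rw [Real.rpow_zero, one_mul, freud_rpow4 x]
  rw [this, integral_rpow_mul_exp_neg_rpow (by norm_num) (by norm_num)]
  norm_num
  ring

lemma freud_moment2 : ∫ x : ℝ, x ^ 2 * Real.exp (-x ^ 4) = Real.Gamma (3 / 4) / 2 := by
  have habs : ∫ x : ℝ, x ^ 2 * Real.exp (-x ^ 4)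
      = ∫ x : ℝ, |x| ^ 2 * Real.exp (-|x| ^ 4) := by
    congr 1; funext x
    rw [sq_abs, ← abs_pow, abs_of_nonneg (by positivity : (0:ℝ) ≤ x ^ 4)]
  rw [habs, integral_comp_abs (f := fun x => x ^ 2 * Real.exp (-x ^ 4))]
  have : ∫ x in Set.Ioi (0:ℝ), x ^ 2 * Real.exp (-x ^ 4)
      = ∫ x in Set.Ioi (0:ℝ), x ^ (2:ℝ) * Real.exp (-x ^ (4:ℝ)) := by
    refine setIntegral_congr_fun measurableSet_Ioi fun x hx => ?_
    rw [freud_rpow4 x, show (2:ℝ) = ((2:ℕ):ℝ) by norm_num, Real.rpow_natCast]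
  rw [this, integral_rpow_mul_exp_neg_rpow (by norm_num) (by norm_num)]
  norm_num
  ring

lemma freud_sq_pos (Q : Polynomial ℝ) (hQ : Q ≠ 0) : 0 < freudIF (Q * Q) := by
  rw [freudIF_apply]
  set f : ℝ → ℝ := fun x => (Q * Q).eval x * Real.exp (-x ^ 4) with hf
  have hnn : 0 ≤ f := fun x => by
    show 0 ≤ eval x (Q * Q) * Real.exp (-x ^ 4)
    rw [eval_mul, ← sq]
    positivity
  rw [integral_pos_iff_support_of_nonneg hnn (freud_integrable _)]
  have hsupp : Function.support f = {x : ℝ | eval x Q ≠ 0} := by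
    ext x
    simp only [Function.support, hf, Set.mem_setOf_eq, eval_mul, mul_ne_zero_iff]
    constructor
    · rintro ⟨⟨h, -⟩, -⟩; exact h
    · exact fun h => ⟨⟨h, h⟩, (Real.exp_pos _).ne'⟩
  have hcompl : volume {x : ℝ | eval x Q = 0} = 0 := by
    refine Set.Finite.measure_zero ?_ volume
    exact Polynomial.finite_setOf_isRoot hQ
  have hle : volume (Set.univ : Set ℝ) ≤ volume (Function.support f)
      + volume {x : ℝ | eval x Q = 0} := by
    refine le_trans (le_of_eq ?_) (measure_union_le _ _)
    congr 1
    rw [hsupp]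
    ext x
    by_cases h : eval x Q = 0 <;> simp [h]
  rw [Real.volume_univ, hcompl, add_zero] at hle
  exact lt_of_lt_of_le (by norm_num) (le_top.trans hle : (⊤:ENNReal) ≤ _)

/-- The Freud inner product `⟨f,g⟩_F = ∫_ℝ f(x) g(x) e^{-x⁴} dx`. -/
noncomputable def innerF (f g : Polynomial ℝ) : ℝ :=
  ∫ x : ℝ, f.eval x * g.eval x * Real.exp (-x ^ 4)

lemma innerF_eq (f g : Polynomial ℝ) : innerF f g = freudIF (f * g) := by
  rw [innerF, freudIF_apply]
  congr 1; funext x; rw [eval_mul]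

/-- For the monic Freud polynomials `P n`, orthogonal with respect to the weight
`e^{-x⁴}` on `ℝ`, satisfying `x P_n = P_{n+1} + c_n P_{n-1}` with `P 0 = 1`, `P 1 = X`
and `c 0 = 0`, the recurrence coefficients satisfy the string equation
`n = 4 c_n (c_{n+1} + c_n + c_{n-1})` for all `n ≥ 1`, and `c 1 = Γ(3/4)/Γ(1/4)`. -/
theorem freud_string_equation
    (P : ℕ → Polynomial ℝ) (c : ℕ → ℝ)
    (hmonic : ∀ n, (P n).Monic) (hdeg : ∀ n, (P n).natDegree = n)
    (horth : ∀ n m : ℕ, m < n → innerF (P n) (X ^ m) = 0)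
    (hP0 : P 0 = 1) (hP1 : P 1 = X) (hc0 : c 0 = 0)
    (hrec : ∀ n, 1 ≤ n → X * P n = P (n + 1) + C (c n) * P (n - 1)) :
    (∀ n : ℕ, 1 ≤ n → (n : ℝ) = 4 * c n * (c (n + 1) + c n + c (n - 1))) ∧
      c 1 = Real.Gamma (3 / 4) / Real.Gamma (1 / 4) := by
  -- orthogonality against all lower-degree polynomials
  have horth' : ∀ (n : ℕ) (q : Polynomial ℝ), q.degree < (n : ℕ) → freudIF (P n * q) = 0 := by
    intro n q hq
    by_cases h0 : q = 0
    · simp [h0]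
    · have hnd : q.natDegree < n := (Polynomial.natDegree_lt_iff_degree_lt h0).2 hq
      rw [Polynomial.as_sum_range' q n hnd, Finset.mul_sum, map_sum]
      refine Finset.sum_eq_zero fun i hi => ?_
      rw [← C_mul_X_pow_eq_monomial,
        show P n * (C (q.coeff i) * X ^ i) = C (q.coeff i) * (P n * X ^ i) by ring,
        freud_C_mul, ← innerF_eq, horth n i (Finset.mem_range.1 hi),
        mul_zero]
  have hPP : ∀ m k : ℕ, m < k → freudIF (P k * P m) = 0 := by
    intro m k hmk
    apply horth' k (P m)
    rw [Polynomial.degree_eq_natDegree (hmonic m).ne_zero, hdeg m]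
    exact_mod_cast hmk
  set h : ℕ → ℝ := fun n => freudIF (P n * P n) with hh
  have hpos : ∀ n, 0 < h n := fun n => freud_sq_pos (P n) (hmonic n).ne_zero
  -- the recurrence, extended to n = 0
  have hrec' : ∀ n, X * P n = P (n + 1) + C (c n) * P (n - 1) := by
    intro n
    cases n with
    | zero => rw [hP0, hP1, hc0, mul_one]; simp
    | succ m => exact hrec (m + 1) (Nat.le_add_left 1 m)
  -- h (n+1) = c (n+1) * h n
  have hB : ∀ d : ℕ, h (d + 1) = c (d + 1) * h d := by
    intro d
    have e1 : freudIF ((X * P (d + 1)) * P d) = c (d + 1) * h d := by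
      rw [hrec' (d + 1)]
      simp only [Nat.add_sub_cancel]
      rw [add_mul, map_add, hPP d (d + 2) (by omega),
        show C (c (d + 1)) * P d * P d = C (c (d + 1)) * (P d * P d) by ring,
        freud_C_mul, zero_add]
    have e2 : freudIF ((X * P (d + 1)) * P d) = h (d + 1) := by
      rw [show (X * P (d + 1)) * P d = P (d + 1) * (X * P d) by ring, hrec' d,
        mul_add, map_add,
        show P (d + 1) * (C (c d) * P (d - 1)) = C (c d) * (P (d + 1) * P (d - 1)) by ring,
        freud_C_mul, hPP (d - 1) (d + 1) (by omega), mul_zero, add_zero]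
    rw [← e2, e1]
  -- main string equation
  have hmain : ∀ d : ℕ, ((d : ℝ) + 1) * h d
      = 4 * ((c (d + 2) + c (d + 1)) * h (d + 1) + c (d + 1) * c d * c d * h (d - 1)) := by
    intro d
    -- integration by parts
    have hibp := freud_IBP (P (d + 1) * P d)
    rw [derivative_mul, map_add] at hibp
    -- second term of derivative is orthogonal
    have hd2 : freudIF (P (d + 1) * derivative (P d)) = 0 := by
      refine horth' (d + 1) _ ?_
      rcases eq_or_ne (derivative (P d)) 0 with hz | hz
      · rw [hz, Polynomial.degree_zero]; exact WithBot.bot_lt_coe _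
      · have h1 : (derivative (P d)).degree < (P d).degree :=
          Polynomial.degree_derivative_lt (hmonic d).ne_zero
        rw [Polynomial.degree_eq_natDegree (hmonic d).ne_zero, hdeg d] at h1
        exact h1.trans (by exact_mod_cast Nat.lt_succ_self d)
    -- first term equals (d+1) * h d
    have hd1 : freudIF (derivative (P (d + 1)) * P d) = ((d : ℝ) + 1) * h d := by
      set r := derivative (P (d + 1)) - C ((d : ℝ) + 1) * P d with hr
      have hrd : r.degree < (d : ℕ) := by
        rw [Polynomial.degree_lt_iff_coeff_zero]
        intro m hm
        have hm' : d ≤ m := by exact_mod_cast hm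
        rw [hr, coeff_sub, Polynomial.coeff_derivative, coeff_C_mul]
        rcases eq_or_lt_of_le hm' with heq | hlt
        · rw [← heq]
          have c1 : (P (d + 1)).coeff (d + 1) = 1 := by
            have := (hmonic (d + 1)).coeff_natDegree
            rwa [hdeg (d + 1)] at this
          have c2 : (P d).coeff d = 1 := by
            have := (hmonic d).coeff_natDegree
            rwa [hdeg d] at this
          rw [c1, c2]
          ring
        · have c1 : (P (d + 1)).coeff (m + 1) = 0 :=
            Polynomial.coeff_eq_zero_of_natDegree_lt (by rw [hdeg]; omega)
          have c2 : (P d).coeff m = 0 :=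
            Polynomial.coeff_eq_zero_of_natDegree_lt (by rw [hdeg]; omega)
          rw [c1, c2]
          ring
      have : derivative (P (d + 1)) = C ((d : ℝ) + 1) * P d + r := by rw [hr]; ring
      rw [this, add_mul, map_add,
        show C ((d : ℝ) + 1) * P d * P d = C ((d : ℝ) + 1) * (P d * P d) by ring,
        freud_C_mul, show r * P d = P d * r by ring, horth' d r hrd, add_zero]
    -- expansion of X^3 * (P (d+1) * P d)
    have hX2 : X ^ 2 * P (d + 1) = P (d + 3) + C (c (d + 2) + c (d + 1)) * P (d + 1)
        + C (c (d + 1) * c d) * P (d - 1) := by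
      have e : X ^ 2 * P (d + 1) = X * P (d + 2) + C (c (d + 1)) * (X * P d) := by
        rw [show X ^ 2 * P (d + 1) = X * (X * P (d + 1)) by ring, hrec' (d + 1)]
        simp only [Nat.add_sub_cancel]
        ring
      rw [hrec' (d + 2), hrec' d] at e
      simp only [show d + 2 - 1 = d + 1 from rfl] at e
      rw [e]
      simp only [C_add, C_mul]
      ring
    have hexp : freudIF (X ^ 3 * (P (d + 1) * P d))
        = (c (d + 2) + c (d + 1)) * h (d + 1) + c (d + 1) * c d * c d * h (d - 1) := by
      have e : X ^ 3 * (P (d + 1) * P d) = (X ^ 2 * P (d + 1)) * (X * P d) := by ring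
      rw [e, hX2, hrec' d]
      have expand : (P (d + 3) + C (c (d + 2) + c (d + 1)) * P (d + 1)
            + C (c (d + 1) * c d) * P (d - 1)) * (P (d + 1) + C (c d) * P (d - 1))
          = C (c (d + 2) + c (d + 1)) * (P (d + 1) * P (d + 1))
            + C (c (d + 1) * c d * c d) * (P (d - 1) * P (d - 1))
            + (P (d + 3) * P (d + 1))
            + C (c d) * (P (d + 3) * P (d - 1))
            + C ((c (d + 2) + c (d + 1)) * c d) * (P (d + 1) * P (d - 1))
            + C (c (d + 1) * c d) * (P (d + 1) * P (d - 1)) := by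
        simp only [C_add, C_mul]
        ring
      rw [expand, map_add, map_add, map_add, map_add, map_add,
        freud_C_mul, freud_C_mul, freud_C_mul, freud_C_mul, freud_C_mul,
        hPP (d + 1) (d + 3) (by omega), hPP (d - 1) (d + 1) (by omega),
        hPP (d - 1) (d + 3) (by omega)]
      have hdef : ∀ n, freudIF (P n * P n) = h n := fun _ => rfl
      rw [hdef, hdef]
      ring
    rw [hd2, add_zero, hd1, hexp] at hibp
    exact hibp
  -- divide by h d
  have hstring : ∀ n : ℕ, 1 ≤ n → (n : ℝ) = 4 * c n * (c (n + 1) + c n + c (n - 1)) := by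
    intro n hn
    obtain ⟨d, rfl⟩ : ∃ d, n = d + 1 := ⟨n - 1, by omega⟩
    have hm := hmain d
    have hB1 : h (d + 1) = c (d + 1) * h d := hB d
    have hcc : c d * c d * h (d - 1) = c d * h d := by
      cases d with
      | zero => rw [hc0]; ring
      | succ e =>
        have := hB e
        simp only [Nat.add_sub_cancel]
        rw [this]; ring
    rw [hB1] at hm
    have hm' : ((d : ℝ) + 1) * h d
        = 4 * c (d + 1) * (c (d + 2) + c (d + 1) + c d) * h d := by
      linear_combination hm + 4 * c (d + 1) * hcc
    have hne := (hpos d).ne'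
    have : ((d : ℝ) + 1) = 4 * c (d + 1) * (c (d + 2) + c (d + 1) + c d) :=
      mul_right_cancel₀ hne hm'
    simp only [Nat.add_sub_cancel]
    push_cast
    linarith [this]
  refine ⟨hstring, ?_⟩
  -- value of c 1
  have h0v : h 0 = Real.Gamma (1 / 4) / 2 := by
    rw [hh]
    simp only [hP0, mul_one]
    rw [freudIF_apply]
    simpa using freud_moment0
  have h1v : h 1 = Real.Gamma (3 / 4) / 2 := by
    rw [hh]
    simp only [hP1]
    rw [freudIF_apply]
    have : ∀ x : ℝ, eval x (X * X : Polynomial ℝ) = x ^ 2 := fun x => by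
      simp [sq]
    simp only [this]
    exact freud_moment2
  have hB0 := hB 0
  rw [h0v, h1v] at hB0
  have hΓ : (0:ℝ) < Real.Gamma (1 / 4) := Real.Gamma_pos_of_pos (by norm_num)
  field_simp at hB0 ⊢
  linarith [hB0]
end

section
/- The monic Freud polynomials P_n for the weight e^{-x^4} satisfy the structure relation P_n'(x) = n P_{n-1}(x) + d_n P_{n-3}(x) for n ≥ 3, where d_n = 4 k_n / k_{n-3} and k_n = ∫_ℝ P_n(x)^2 e^{-x^4} dx. -/
open Polynomial MeasureTheory Filter Topology

namespace FreudAux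

/-- The basic Freud functional. -/
noncomputable def J (p : Polynomial ℝ) : ℝ := ∫ x : ℝ, p.eval x * Real.exp (-x ^ 4)

lemma cont (p : Polynomial ℝ) : Continuous fun x : ℝ => p.eval x * Real.exp (-x ^ 4) :=
  (p.continuous).mul (Real.continuous_exp.comp (continuous_pow 4).neg)

lemma habs (p : Polynomial ℝ) :
    Tendsto (fun x => |p.eval x| * Real.exp (-x)) atTop (𝓝 0) := by
  have h := (p.tendsto_div_exp_atTop).abs
  rw [abs_zero] at h
  refine h.congr fun x => ?_
  rw [abs_div, abs_of_pos (Real.exp_pos x), Real.exp_neg, div_eq_mul_inv]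

lemma habs_bot (p : Polynomial ℝ) :
    Tendsto (fun x => |p.eval x| * Real.exp x) atBot (𝓝 0) := by
  have h := (habs (p.comp (-X))).comp tendsto_neg_atBot_atTop
  refine h.congr fun x => ?_
  simp [Function.comp, eval_comp]

lemma tendsto_top (p : Polynomial ℝ) :
    Tendsto (fun x => p.eval x * Real.exp (-x ^ 4)) atTop (𝓝 0) := by
  have hb : Tendsto (fun x => Real.exp 1 * (|p.eval x| * Real.exp (-x))) atTop (𝓝 0) := by
    simpa using (habs p).const_mul (Real.exp 1)
  refine squeeze_zero_norm (fun x => ?_) hb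
  rw [Real.norm_eq_abs, abs_mul, abs_of_pos (Real.exp_pos _)]
  have h1 : Real.exp (-x ^ 4) ≤ Real.exp 1 * Real.exp (-x) := by
    rw [← Real.exp_add]
    apply Real.exp_le_exp.2
    nlinarith [sq_nonneg (x ^ 2 - 1), sq_nonneg (x - 1), sq_nonneg x, sq_nonneg (x + 1)]
  calc |p.eval x| * Real.exp (-x ^ 4) ≤ |p.eval x| * (Real.exp 1 * Real.exp (-x)) :=
        mul_le_mul_of_nonneg_left h1 (abs_nonneg _)
    _ = Real.exp 1 * (|p.eval x| * Real.exp (-x)) := by ring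

lemma tendsto_bot (p : Polynomial ℝ) :
    Tendsto (fun x => p.eval x * Real.exp (-x ^ 4)) atBot (𝓝 0) := by
  have hb : Tendsto (fun x => Real.exp 1 * (|p.eval x| * Real.exp x)) atBot (𝓝 0) := by
    simpa using (habs_bot p).const_mul (Real.exp 1)
  refine squeeze_zero_norm (fun x => ?_) hb
  rw [Real.norm_eq_abs, abs_mul, abs_of_pos (Real.exp_pos _)]
  have h1 : Real.exp (-x ^ 4) ≤ Real.exp 1 * Real.exp x := by
    rw [← Real.exp_add]
    apply Real.exp_le_exp.2
    nlinarith [sq_nonneg (x ^ 2 - 1), sq_nonneg (x - 1), sq_nonneg x, sq_nonneg (x + 1)]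
  calc |p.eval x| * Real.exp (-x ^ 4) ≤ |p.eval x| * (Real.exp 1 * Real.exp x) :=
        mul_le_mul_of_nonneg_left h1 (abs_nonneg _)
    _ = Real.exp 1 * (|p.eval x| * Real.exp x) := by ring

lemma ratio_eq (p : Polynomial ℝ) (x : ℝ) :
    p.eval x * Real.exp (-x ^ 4) / Real.exp (-(1 : ℝ) * x ^ 2)
      = p.eval x * Real.exp (x ^ 2 - x ^ 4) := by
  rw [mul_div_assoc, ← Real.exp_sub]
  have h : -x ^ 4 - -(1 : ℝ) * x ^ 2 = x ^ 2 - x ^ 4 := by ring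
  rw [h]

lemma ratio_tendsto_top (p : Polynomial ℝ) :
    Tendsto (fun x => p.eval x * Real.exp (-x ^ 4) / Real.exp (-(1 : ℝ) * x ^ 2))
      atTop (𝓝 0) := by
  have hb : Tendsto (fun x => Real.exp 3 * (|p.eval x| * Real.exp (-x))) atTop (𝓝 0) := by
    simpa using (habs p).const_mul (Real.exp 3)
  refine squeeze_zero_norm (fun x => ?_) hb
  rw [ratio_eq, Real.norm_eq_abs, abs_mul, abs_of_pos (Real.exp_pos _)]
  have h1 : Real.exp (x ^ 2 - x ^ 4) ≤ Real.exp 3 * Real.exp (-x) := by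
    rw [← Real.exp_add]
    apply Real.exp_le_exp.2
    nlinarith [sq_nonneg (x ^ 2 - 1), sq_nonneg (x - 1), sq_nonneg x, sq_nonneg (x + 1)]
  calc |p.eval x| * Real.exp (x ^ 2 - x ^ 4) ≤ |p.eval x| * (Real.exp 3 * Real.exp (-x)) :=
        mul_le_mul_of_nonneg_left h1 (abs_nonneg _)
    _ = Real.exp 3 * (|p.eval x| * Real.exp (-x)) := by ring

lemma ratio_tendsto_bot (p : Polynomial ℝ) :
    Tendsto (fun x => p.eval x * Real.exp (-x ^ 4) / Real.exp (-(1 : ℝ) * x ^ 2))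
      atBot (𝓝 0) := by
  have hb : Tendsto (fun x => Real.exp 3 * (|p.eval x| * Real.exp x)) atBot (𝓝 0) := by
    simpa using (habs_bot p).const_mul (Real.exp 3)
  refine squeeze_zero_norm (fun x => ?_) hb
  rw [ratio_eq, Real.norm_eq_abs, abs_mul, abs_of_pos (Real.exp_pos _)]
  have h1 : Real.exp (x ^ 2 - x ^ 4) ≤ Real.exp 3 * Real.exp x := by
    rw [← Real.exp_add]
    apply Real.exp_le_exp.2
    nlinarith [sq_nonneg (x ^ 2 - 1), sq_nonneg (x - 1), sq_nonneg x, sq_nonneg (x + 1)]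
  calc |p.eval x| * Real.exp (x ^ 2 - x ^ 4) ≤ |p.eval x| * (Real.exp 3 * Real.exp x) :=
        mul_le_mul_of_nonneg_left h1 (abs_nonneg _)
    _ = Real.exp 3 * (|p.eval x| * Real.exp x) := by ring

lemma integrable (p : Polynomial ℝ) :
    Integrable fun x : ℝ => p.eval x * Real.exp (-x ^ 4) := by
  have hg : Integrable fun x : ℝ => Real.exp (-(1 : ℝ) * x ^ 2) :=
    integrable_exp_neg_mul_sq one_pos
  refine (cont p).locallyIntegrable.integrable_of_isBigO_atBot_atTop
    (g := fun x : ℝ => Real.exp (-(1 : ℝ) * x ^ 2))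
    (g' := fun x : ℝ => Real.exp (-(1 : ℝ) * x ^ 2))
    ?_ (hg.integrableAtFilter _) ?_ (hg.integrableAtFilter _)
  · exact (Asymptotics.isLittleO_of_tendsto
      (fun x hx => absurd hx (Real.exp_ne_zero _)) (ratio_tendsto_bot p)).isBigO
  · exact (Asymptotics.isLittleO_of_tendsto
      (fun x hx => absurd hx (Real.exp_ne_zero _)) (ratio_tendsto_top p)).isBigO

lemma J_add (p q : Polynomial ℝ) : J (p + q) = J p + J q := by
  unfold J
  simp only [eval_add, add_mul]
  exact integral_add (integrable p) (integrable q)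

lemma J_zero : J 0 = 0 := by
  unfold J; simp

lemma J_smul (a : ℝ) (p : Polynomial ℝ) : J (C a * p) = a * J p := by
  unfold J
  simp only [eval_mul, eval_C, mul_assoc]
  exact integral_const_mul a _

lemma J_neg (p : Polynomial ℝ) : J (-p) = -J p := by
  unfold J
  simp only [eval_neg, neg_mul]
  exact integral_neg _

lemma J_sub (p q : Polynomial ℝ) : J (p - q) = J p - J q := by
  rw [sub_eq_add_neg, J_add, J_neg, sub_eq_add_neg]

lemma J_sum {ι : Type*} (s : Finset ι) (f : ι → Polynomial ℝ) :
    J (∑ i ∈ s, f i) = ∑ i ∈ s, J (f i) := by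
  classical
  induction s using Finset.induction with
  | empty => simp [J_zero]
  | insert a s h ih => rw [Finset.sum_insert h, Finset.sum_insert h, J_add, ih]

lemma J_expand (p q : Polynomial ℝ) :
    J (p * q) = ∑ m ∈ q.support, q.coeff m * J (p * X ^ m) := by
  have h : p * q = ∑ m ∈ q.support, C (q.coeff m) * (p * X ^ m) := by
    conv_lhs => rw [q.as_sum_support_C_mul_X_pow]
    rw [Finset.mul_sum]
    exact Finset.sum_congr rfl fun m _ => by ring
  rw [h, J_sum]
  exact Finset.sum_congr rfl fun m _ => J_smul _ _

lemma innerF_eq (f g : Polynomial ℝ) : innerF f g = J (f * g) := by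
  unfold innerF J
  simp only [eval_mul]

lemma J_derivative (r : Polynomial ℝ) : J (derivative r) = 4 * J (X ^ 3 * r) := by
  have hder : ∀ x : ℝ, HasDerivAt (fun y : ℝ => r.eval y * Real.exp (-y ^ 4))
      ((derivative r - C 4 * (X ^ 3 * r)).eval x * Real.exp (-x ^ 4)) x := by
    intro x
    have h1 : HasDerivAt (fun y : ℝ => r.eval y) ((derivative r).eval x) x := r.hasDerivAt x
    have h2 : HasDerivAt (fun y : ℝ => -y ^ 4) (-(4 * x ^ 3)) x := by
      have h3 := (hasDerivAt_pow 4 x).neg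
      norm_num at h3
      exact h3
    have h4 := h1.fun_mul h2.exp
    refine h4.congr_deriv ?_
    simp only [eval_sub, eval_mul, eval_pow, eval_C, eval_X]
    ring
  have hint : Integrable fun x : ℝ => (derivative r - C 4 * (X ^ 3 * r)).eval x *
      Real.exp (-x ^ 4) := integrable _
  have h1 := integral_Iic_of_hasDerivAt_of_tendsto' (a := (0 : ℝ))
      (fun x _ => hder x) hint.integrableOn (tendsto_bot r)
  have h2 := integral_Ioi_of_hasDerivAt_of_tendsto' (a := (0 : ℝ))
      (fun x _ => hder x) hint.integrableOn (tendsto_top r)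
  have h0 : J (derivative r - C 4 * (X ^ 3 * r)) = 0 := by
    unfold J
    rw [← intervalIntegral.integral_Iic_add_Ioi (b := (0 : ℝ)) hint.integrableOn hint.integrableOn, h1, h2]
    ring
  rw [J_sub, J_smul] at h0
  linarith

lemma J_odd (r : Polynomial ℝ) (h : ∀ x : ℝ, r.eval (-x) = -r.eval x) : J r = 0 := by
  have h1 : (∫ x : ℝ, (fun y : ℝ => r.eval y * Real.exp (-y ^ 4)) (-x))
      = ∫ x : ℝ, r.eval x * Real.exp (-x ^ 4) :=
    integral_neg_eq_self (fun y : ℝ => r.eval y * Real.exp (-y ^ 4)) volume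
  have h7 : (fun x : ℝ => (fun y : ℝ => r.eval y * Real.exp (-y ^ 4)) (-x))
      = fun x : ℝ => -(r.eval x * Real.exp (-x ^ 4)) := by
    funext x
    show r.eval (-x) * Real.exp (-(-x) ^ 4) = _
    have h4 : (-x : ℝ) ^ 4 = x ^ 4 := by ring
    rw [h x, h4]
    ring
  rw [h7, integral_neg] at h1
  have h8 : J r = ∫ x : ℝ, r.eval x * Real.exp (-x ^ 4) := rfl
  rw [h8]
  linarith [h1]

lemma J_sq_pos (p : Polynomial ℝ) (hp : p ≠ 0) : 0 < J (p * p) := by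
  have hnn : ∀ x : ℝ, 0 ≤ (p * p).eval x * Real.exp (-x ^ 4) := by
    intro x
    rw [eval_mul]
    exact mul_nonneg (mul_self_nonneg _) (Real.exp_pos _).le
  have hpos := integral_pos_iff_support_of_nonneg (fun x => hnn x) (integrable (p * p))
  show 0 < ∫ x : ℝ, (p * p).eval x * Real.exp (-x ^ 4)
  refine hpos.2 ?_
  rw [pos_iff_ne_zero]
  intro h0
  have hsub : (Set.univ : Set ℝ) ⊆
      Function.support (fun x : ℝ => (p * p).eval x * Real.exp (-x ^ 4))
        ∪ {x : ℝ | p.IsRoot x} := by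
    intro x _
    by_cases hx : p.eval x = 0
    · exact Or.inr hx
    · left
      simp only [Function.mem_support, eval_mul]
      exact mul_ne_zero (mul_ne_zero hx hx) (Real.exp_ne_zero _)
  have hle : volume (Set.univ : Set ℝ) ≤
      volume (Function.support fun x : ℝ => (p * p).eval x * Real.exp (-x ^ 4))
        + volume {x : ℝ | p.IsRoot x} :=
    le_trans (measure_mono hsub) (measure_union_le _ _)
  rw [h0, (p.finite_setOf_isRoot hp).measure_zero volume, add_zero, Real.volume_univ] at hle
  simp at hle

end FreudAux

/-- The monic Freud polynomials satisfy the structure relation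
`P_n' = n P_{n-1} + d_n P_{n-3}` for `n ≥ 3`, where `d n = 4 k n / k (n-3)`. -/
theorem freud_structure_relation
    (P : ℕ → Polynomial ℝ) (k d : ℕ → ℝ)
    (hmonic : ∀ n, (P n).Monic) (hdeg : ∀ n, (P n).natDegree = n)
    (horth : ∀ n m : ℕ, m < n → innerF (P n) (X ^ m) = 0)
    (hk : ∀ n, k n = innerF (P n) (P n))
    (hd : ∀ n, d n = 4 * k n / k (n - 3)) :
    ∀ n, 3 ≤ n →
      Polynomial.derivative (P n) = C (n : ℝ) * P (n - 1) + C (d n) * P (n - 3) := by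
  have hXorth : ∀ i m : ℕ, m < i → FreudAux.J (P i * X ^ m) = 0 := by
    intro i m him
    have := horth i m him
    rwa [FreudAux.innerF_eq] at this
  have hJorth : ∀ (i : ℕ) (q : Polynomial ℝ), (∀ m ∈ q.support, m < i) →
      FreudAux.J (P i * q) = 0 := by
    intro i q hq
    rw [FreudAux.J_expand]
    exact Finset.sum_eq_zero fun m hm => by rw [hXorth i m (hq m hm), mul_zero]
  have hkJ : ∀ i, k i = FreudAux.J (P i * P i) := fun i => by
    rw [hk i, FreudAux.innerF_eq]
  have hkpos : ∀ i, 0 < k i := fun i => by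
    rw [hkJ]; exact FreudAux.J_sq_pos (P i) (hmonic i).ne_zero
  have hzero : ∀ R : Polynomial ℝ, (∀ m ∈ R.support, FreudAux.J (R * X ^ m) = 0) → R = 0 := by
    intro R hR
    by_contra hR0
    have hpos := FreudAux.J_sq_pos R hR0
    rw [FreudAux.J_expand] at hpos
    have hz : (∑ m ∈ R.support, R.coeff m * FreudAux.J (R * X ^ m)) = 0 :=
      Finset.sum_eq_zero fun m hm => by rw [hR m hm, mul_zero]
    rw [hz] at hpos
    exact lt_irrefl 0 hpos
  have hkX : ∀ i : ℕ, FreudAux.J (P i * X ^ i) = k i := by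
    intro i
    have hsplit : P i * X ^ i = P i * P i + P i * (X ^ i - P i) := by ring
    rw [hsplit, FreudAux.J_add, ← hkJ]
    have hz : FreudAux.J (P i * (X ^ i - P i)) = 0 := by
      apply hJorth
      intro m hm
      have hm1 : m ≤ (X ^ i - P i).natDegree := le_natDegree_of_mem_supp m hm
      have hle : (X ^ i - P i).natDegree ≤ i :=
        le_trans (natDegree_sub_le _ _) (by simp [hdeg i])
      have hne : m ≠ i := by
        intro hmi; subst hmi
        apply Polynomial.mem_support_iff.1 hm
        rw [coeff_sub, coeff_X_pow, if_pos rfl]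
        have hc := (hmonic m).coeff_natDegree
        rw [hdeg m] at hc
        rw [hc]
        ring
      omega
    rw [hz, add_zero]
  -- parity of P i
  have hpar : ∀ (i : ℕ) (x : ℝ), (P i).eval (-x) = (-1 : ℝ) ^ i * (P i).eval x := by
    intro i
    have hS : (P i).comp (-X) - C ((-1 : ℝ) ^ i) * P i = 0 := by
      apply hzero
      intro m hm
      have hmlt : m < i := by
        have h1 : m ≤ ((P i).comp (-X) - C ((-1 : ℝ) ^ i) * P i).natDegree :=
          le_natDegree_of_mem_supp m hm
        have h2 : ((P i).comp (-X)).natDegree ≤ i := by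
          refine le_trans natDegree_comp_le ?_
          simp [hdeg i]
        have h3 : (C ((-1 : ℝ) ^ i) * P i).natDegree ≤ i :=
          le_trans (natDegree_C_mul_le _ _) (le_of_eq (hdeg i))
        have h4 : ((P i).comp (-X) - C ((-1 : ℝ) ^ i) * P i).natDegree ≤ i :=
          le_trans (natDegree_sub_le _ _) (max_le h2 h3)
        have hne : m ≠ i := by
          intro hmi; subst hmi
          apply Polynomial.mem_support_iff.1 hm
          rw [coeff_sub, coeff_C_mul]
          have hXdeg : (-X : Polynomial ℝ).natDegree = 1 := by simp
          have hcc : ((P m).comp (-X)).coeff m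
              = (P m).leadingCoeff * (-X : Polynomial ℝ).leadingCoeff ^ m := by
            have h5 := Polynomial.coeff_comp_degree_mul_degree (p := P m) (q := -X)
              (by rw [hXdeg]; norm_num)
            rwa [hdeg, hXdeg, mul_one] at h5
          have hlc : (-X : Polynomial ℝ).leadingCoeff = -1 := by simp
          have hc := (hmonic m).coeff_natDegree
          rw [hdeg m] at hc
          rw [hcc, (hmonic m).leadingCoeff, hlc, hc]
          ring
        omega
      rw [sub_mul, FreudAux.J_sub, mul_assoc, FreudAux.J_smul]
      have hA : FreudAux.J ((P i).comp (-X) * X ^ m)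
          = (-1 : ℝ) ^ m * FreudAux.J (P i * X ^ m) := by
        have h6 : (∫ x : ℝ, (fun y : ℝ => ((P i).comp (-X) * X ^ m).eval y
              * Real.exp (-y ^ 4)) (-x))
            = ∫ x : ℝ, ((P i).comp (-X) * X ^ m).eval x * Real.exp (-x ^ 4) :=
          integral_neg_eq_self (fun y : ℝ => ((P i).comp (-X) * X ^ m).eval y
            * Real.exp (-y ^ 4)) volume
        have h7 : (fun x : ℝ => (fun y : ℝ => ((P i).comp (-X) * X ^ m).eval y
              * Real.exp (-y ^ 4)) (-x))
            = fun x : ℝ => (-1 : ℝ) ^ m * ((P i * X ^ m).eval x * Real.exp (-x ^ 4)) := by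
          funext x
          show ((P i).comp (-X) * X ^ m).eval (-x) * Real.exp (-(-x) ^ 4) = _
          simp only [eval_mul, eval_comp, eval_neg, eval_X, eval_pow, neg_neg]
          have h4 : (-x : ℝ) ^ 4 = x ^ 4 := by ring
          have h5 : (-x : ℝ) ^ m = (-1 : ℝ) ^ m * x ^ m := by rw [neg_pow]
          rw [h4, h5]
          ring
        rw [h7, MeasureTheory.integral_const_mul] at h6
        have h8 : FreudAux.J ((P i).comp (-X) * X ^ m)
            = ∫ x : ℝ, ((P i).comp (-X) * X ^ m).eval x * Real.exp (-x ^ 4) := rfl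
        have h9 : FreudAux.J (P i * X ^ m)
            = ∫ x : ℝ, (P i * X ^ m).eval x * Real.exp (-x ^ 4) := rfl
        rw [h8, h9, ← h6]
      rw [hA, hXorth i m hmlt]
      ring
    intro x
    have heq : (P i).comp (-X) = C ((-1 : ℝ) ^ i) * P i := sub_eq_zero.1 hS
    calc (P i).eval (-x) = ((P i).comp (-X)).eval x := by simp [eval_comp]
      _ = (-1 : ℝ) ^ i * (P i).eval x := by rw [heq]; simp
  have hoddJ : ∀ i j : ℕ, Odd (i + j) → FreudAux.J (P i * X ^ j) = 0 := by
    intro i j hodd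
    apply FreudAux.J_odd
    intro x
    rw [eval_mul, eval_mul, eval_pow, eval_pow, eval_X, eval_X, hpar i x]
    have h5 : (-x : ℝ) ^ j = (-1 : ℝ) ^ j * x ^ j := by rw [neg_pow]
    rw [h5]
    have hpow : (-1 : ℝ) ^ i * (-1 : ℝ) ^ j = -1 := by
      rw [← pow_add]; exact Odd.neg_one_pow hodd
    calc (-1 : ℝ) ^ i * (P i).eval x * ((-1 : ℝ) ^ j * x ^ j)
        = ((-1 : ℝ) ^ i * (-1 : ℝ) ^ j) * ((P i).eval x * x ^ j) := by ring
      _ = -((P i).eval x * x ^ j) := by rw [hpow]; ring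
  -- main argument
  intro n hn
  obtain ⟨b, rfl⟩ : ∃ b : ℕ, n = b + 3 := ⟨n - 3, by omega⟩
  have hsub1 : b + 3 - 1 = b + 2 := by omega
  have hsub3 : b + 3 - 3 = b := by omega
  rw [hsub1, hsub3]
  have hd3 : d (b + 3) * k b = 4 * k (b + 3) := by
    rw [hd, hsub3]
    exact div_mul_cancel₀ _ (ne_of_gt (hkpos b))
  have hDzero : derivative (P (b + 3))
      - (C ((b + 3 : ℕ) : ℝ) * P (b + 2) + C (d (b + 3)) * P b) = 0 := by
    apply hzero
    intro m hm
    have hmle : m ≤ b + 1 := by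
      have h1 : m ≤ (derivative (P (b + 3))
          - (C ((b + 3 : ℕ) : ℝ) * P (b + 2) + C (d (b + 3)) * P b)).natDegree :=
        le_natDegree_of_mem_supp m hm
      have hd1 : (derivative (P (b + 3))).natDegree ≤ b + 2 := by
        have h6 := natDegree_derivative_le (P (b + 3))
        rw [hdeg] at h6
        omega
      have hd2 : (C ((b + 3 : ℕ) : ℝ) * P (b + 2)).natDegree ≤ b + 2 :=
        le_trans (natDegree_C_mul_le _ _) (le_of_eq (hdeg _))
      have hd2' : (C (d (b + 3)) * P b).natDegree ≤ b + 2 :=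
        le_trans (natDegree_C_mul_le _ _) (by rw [hdeg]; omega)
      have hD2 : (derivative (P (b + 3))
          - (C ((b + 3 : ℕ) : ℝ) * P (b + 2) + C (d (b + 3)) * P b)).natDegree ≤ b + 2 :=
        le_trans (natDegree_sub_le _ _)
          (max_le hd1 (le_trans (natDegree_add_le _ _) (max_le hd2 hd2')))
      have hne : m ≠ b + 2 := by
        intro hme; subst hme
        apply Polynomial.mem_support_iff.1 hm
        rw [coeff_sub, coeff_add, coeff_C_mul, coeff_C_mul, coeff_derivative]
        have c1 : (P (b + 3)).coeff (b + 2 + 1) = 1 := by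
          have hc := (hmonic (b + 3)).coeff_natDegree
          rw [hdeg] at hc
          rw [show b + 2 + 1 = b + 3 by omega]
          exact hc
        have c2 : (P (b + 2)).coeff (b + 2) = 1 := by
          have hc := (hmonic (b + 2)).coeff_natDegree
          rwa [hdeg] at hc
        have c3 : (P b).coeff (b + 2) = 0 :=
          coeff_eq_zero_of_natDegree_lt (by rw [hdeg]; omega)
        rw [c1, c2, c3]
        push_cast
        ring
      omega
    rw [sub_mul, add_mul, FreudAux.J_sub, FreudAux.J_add, mul_assoc, mul_assoc,
      FreudAux.J_smul, FreudAux.J_smul]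
    have hIBP : FreudAux.J (derivative (P (b + 3)) * X ^ m)
        = 4 * FreudAux.J (P (b + 3) * X ^ (m + 3))
          - (m : ℝ) * FreudAux.J (P (b + 3) * X ^ (m - 1)) := by
      have hder : derivative (P (b + 3) * X ^ m)
          = derivative (P (b + 3)) * X ^ m + C ((m : ℕ) : ℝ) * (P (b + 3) * X ^ (m - 1)) := by
        rw [derivative_mul, derivative_X_pow]
        ring
      have h1 := FreudAux.J_derivative (P (b + 3) * X ^ m)
      rw [hder, FreudAux.J_add, FreudAux.J_smul] at h1
      have h2 : (X : Polynomial ℝ) ^ 3 * (P (b + 3) * X ^ m) = P (b + 3) * X ^ (m + 3) := by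
        ring
      rw [h2] at h1
      linarith
    rw [hIBP]
    rcases lt_trichotomy m b with hmb | hmb | hmb
    · rw [hXorth (b + 3) (m + 3) (by omega), hXorth (b + 3) (m - 1) (by omega),
        hXorth (b + 2) m (by omega), hXorth b m (by omega)]
      ring
    · rw [hmb]
      rw [hkX (b + 3), hXorth (b + 3) (b - 1) (by omega), hXorth (b + 2) b (by omega), hkX b]
      linarith [hd3]
    · have hm1 : m = b + 1 := by omega
      rw [hm1, show b + 1 - 1 = b by omega]
      rw [hoddJ (b + 3) (b + 1 + 3) ⟨b + 3, by omega⟩, hXorth (b + 3) b (by omega),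
        hXorth (b + 2) (b + 1) (by omega), hoddJ b (b + 1) ⟨b, by omega⟩]
      ring
  exact sub_eq_zero.1 hDzero
end

section
/- Assume λ₂ = 0. Then the monic Freud polynomials P_n and the monic Sobolev orthogonal polynomials Q_n are related by xP_n(x) = Q_{n+1}(x) + a_n Q_{n-1}(x) for n ≥ 1, where a_n = k_n / k̂_{n-1}, k_n = ⟨P_n,P_n⟩_F and k̂_n = ⟨Q_n,Q_n⟩_S. -/
open Polynomial MeasureTheory Filter Topology

/-- The Sobolev inner product
`⟨f,g⟩_S = ⟨f,g⟩_F + λ₁ f(0) g(0) + λ₂ f'(0) g'(0)`. -/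
noncomputable def innerS (l1 l2 : ℝ) (f g : Polynomial ℝ) : ℝ :=
  innerF f g + l1 * f.eval 0 * g.eval 0
    + l2 * (Polynomial.derivative f).eval 0 * (Polynomial.derivative g).eval 0

section Aux

lemma exp_quartic_le (x : ℝ) :
    Real.exp (-x ^ 4) ≤ Real.exp 1 * Real.exp (-2 * x ^ 2) := by
  rw [← Real.exp_add]
  apply Real.exp_le_exp.mpr
  nlinarith [sq_nonneg (x ^ 2 - 1)]

lemma integrable_pow_weight (i : ℕ) :
    Integrable (fun x : ℝ => x ^ i * Real.exp (-x ^ 4)) := by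
  have h1 : Integrable (fun x : ℝ => x ^ (i : ℝ) * Real.exp (-2 * x ^ 2)) :=
    integrable_rpow_mul_exp_neg_mul_sq (by norm_num)
      (lt_of_lt_of_le (by norm_num) (Nat.cast_nonneg i))
  have h1' : Integrable (fun x : ℝ => x ^ i * Real.exp (-2 * x ^ 2)) := by
    simpa [Real.rpow_natCast] using h1
  refine (h1'.abs.const_mul (Real.exp 1)).mono' ?_ ?_
  · exact (Continuous.mul (continuous_pow i)
      (Real.continuous_exp.comp (continuous_pow 4).neg)).aestronglyMeasurable
  · filter_upwards with x
    rw [Real.norm_eq_abs, abs_mul, abs_of_pos (Real.exp_pos _), abs_mul,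
      abs_of_pos (Real.exp_pos _)]
    calc |x ^ i| * Real.exp (-x ^ 4)
        ≤ |x ^ i| * (Real.exp 1 * Real.exp (-2 * x ^ 2)) :=
          mul_le_mul_of_nonneg_left (exp_quartic_le x) (abs_nonneg _)
      _ = Real.exp 1 * (|x ^ i| * Real.exp (-2 * x ^ 2)) := by ring

lemma integrable_poly_weight (p : Polynomial ℝ) :
    Integrable (fun x : ℝ => p.eval x * Real.exp (-x ^ 4)) := by
  have h : (fun x : ℝ => p.eval x * Real.exp (-x ^ 4))
      = fun x => ∑ i ∈ Finset.range (p.natDegree + 1),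
          p.coeff i * (x ^ i * Real.exp (-x ^ 4)) := by
    funext x
    rw [Polynomial.eval_eq_sum_range, Finset.sum_mul]
    simp [mul_assoc]
  rw [h]
  exact integrable_finset_sum _ fun i _ => (integrable_pow_weight i).const_mul _

lemma integrable_F (f g : Polynomial ℝ) :
    Integrable (fun x : ℝ => f.eval x * g.eval x * Real.exp (-x ^ 4)) := by
  simpa [Polynomial.eval_mul] using integrable_poly_weight (f * g)

lemma innerF_comm (f g : Polynomial ℝ) : innerF f g = innerF g f := by
  unfold innerF; congr 1; funext x; ring

lemma innerF_add_right (f g h : Polynomial ℝ) :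
    innerF f (g + h) = innerF f g + innerF f h := by
  unfold innerF
  rw [← integral_add (integrable_F f g) (integrable_F f h)]
  congr 1; funext x; simp only [Polynomial.eval_add]; ring

lemma innerF_Cmul_right (f g : Polynomial ℝ) (c : ℝ) :
    innerF f (C c * g) = c * innerF f g := by
  unfold innerF
  rw [← integral_const_mul]
  congr 1; funext x; simp; ring

lemma innerF_zero_right (f : Polynomial ℝ) : innerF f 0 = 0 := by
  simp [innerF]

lemma innerF_neg_right (f g : Polynomial ℝ) : innerF f (-g) = - innerF f g := by
  unfold innerF
  rw [← integral_neg]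
  congr 1; funext x; simp only [Polynomial.eval_neg]; ring

lemma innerF_sub_right (f g h : Polynomial ℝ) :
    innerF f (g - h) = innerF f g - innerF f h := by
  rw [sub_eq_add_neg, innerF_add_right, innerF_neg_right, sub_eq_add_neg]

lemma innerF_sub_left (f g h : Polynomial ℝ) :
    innerF (f - g) h = innerF f h - innerF g h := by
  rw [innerF_comm, innerF_sub_right, innerF_comm f h, innerF_comm g h]

lemma innerF_Cmul_left (f g : Polynomial ℝ) (c : ℝ) :
    innerF (C c * f) g = c * innerF f g := by
  rw [innerF_comm, innerF_Cmul_right, innerF_comm]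

lemma innerF_sum_right (f : Polynomial ℝ) (s : Finset ℕ) (F : ℕ → Polynomial ℝ) :
    innerF f (∑ i ∈ s, F i) = ∑ i ∈ s, innerF f (F i) := by
  induction s using Finset.cons_induction with
  | empty => simpa using innerF_zero_right f
  | cons i s hi ih => rw [Finset.sum_cons, Finset.sum_cons, innerF_add_right, ih]

lemma innerS_eq (l1 : ℝ) (f g : Polynomial ℝ) :
    innerS l1 0 f g = innerF f g + l1 * f.eval 0 * g.eval 0 := by
  simp [innerS]

lemma innerS_comm (l1 : ℝ) (f g : Polynomial ℝ) :
    innerS l1 0 f g = innerS l1 0 g f := by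
  rw [innerS_eq, innerS_eq, innerF_comm]; ring

lemma innerS_add_right (l1 : ℝ) (f g h : Polynomial ℝ) :
    innerS l1 0 f (g + h) = innerS l1 0 f g + innerS l1 0 f h := by
  simp only [innerS_eq, innerF_add_right, Polynomial.eval_add]; ring

lemma innerS_Cmul_right (l1 : ℝ) (f g : Polynomial ℝ) (c : ℝ) :
    innerS l1 0 f (C c * g) = c * innerS l1 0 f g := by
  simp only [innerS_eq, innerF_Cmul_right, Polynomial.eval_mul, Polynomial.eval_C]; ring

lemma innerS_zero_right (l1 : ℝ) (f : Polynomial ℝ) : innerS l1 0 f 0 = 0 := by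
  simp [innerS_eq, innerF_zero_right]

lemma innerS_sub_right (l1 : ℝ) (f g h : Polynomial ℝ) :
    innerS l1 0 f (g - h) = innerS l1 0 f g - innerS l1 0 f h := by
  simp only [innerS_eq, innerF_sub_right, Polynomial.eval_sub]; ring

lemma innerS_sub_left (l1 : ℝ) (f g h : Polynomial ℝ) :
    innerS l1 0 (f - g) h = innerS l1 0 f h - innerS l1 0 g h := by
  rw [innerS_comm, innerS_sub_right, innerS_comm l1 f h, innerS_comm l1 g h]

lemma innerS_Cmul_left (l1 : ℝ) (f g : Polynomial ℝ) (c : ℝ) :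
    innerS l1 0 (C c * f) g = c * innerS l1 0 f g := by
  rw [innerS_comm, innerS_Cmul_right, innerS_comm]

lemma innerS_sum_right (l1 : ℝ) (f : Polynomial ℝ) (s : Finset ℕ) (F : ℕ → Polynomial ℝ) :
    innerS l1 0 f (∑ i ∈ s, F i) = ∑ i ∈ s, innerS l1 0 f (F i) := by
  induction s using Finset.cons_induction with
  | empty => simpa using innerS_zero_right l1 f
  | cons i s hi ih => rw [Finset.sum_cons, Finset.sum_cons, innerS_add_right, ih]

lemma innerF_eq_zero_of_natDegree_lt (p : Polynomial ℝ) (N : ℕ)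
    (h : ∀ m < N, innerF p (X ^ m) = 0) (q : Polynomial ℝ) (hq : q.natDegree < N) :
    innerF p q = 0 := by
  conv_lhs => rw [q.as_sum_range' N hq]
  rw [innerF_sum_right]
  refine Finset.sum_eq_zero fun i hi => ?_
  rw [← Polynomial.C_mul_X_pow_eq_monomial, innerF_Cmul_right,
    h i (Finset.mem_range.mp hi), mul_zero]

lemma innerS_eq_zero_of_natDegree_lt (l1 : ℝ) (p : Polynomial ℝ) (N : ℕ)
    (h : ∀ m < N, innerS l1 0 p (X ^ m) = 0) (q : Polynomial ℝ) (hq : q.natDegree < N) :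
    innerS l1 0 p q = 0 := by
  conv_lhs => rw [q.as_sum_range' N hq]
  rw [innerS_sum_right]
  refine Finset.sum_eq_zero fun i hi => ?_
  rw [← Polynomial.C_mul_X_pow_eq_monomial, innerS_Cmul_right,
    h i (Finset.mem_range.mp hi), mul_zero]

lemma innerF_self_pos (p : Polynomial ℝ) (hp : p ≠ 0) : 0 < innerF p p := by
  unfold innerF
  rw [integral_pos_iff_support_of_nonneg]
  · have hsupp : (Function.support fun x : ℝ => p.eval x * p.eval x * Real.exp (-x ^ 4))
        = {x : ℝ | p.eval x ≠ 0} := by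
      ext x
      simp [Function.mem_support, mul_ne_zero_iff, Real.exp_ne_zero, and_self]
    rw [hsupp]
    have hfin : Set.Finite {x : ℝ | p.eval x = 0} := Polynomial.finite_setOf_isRoot hp
    have h0 : volume {x : ℝ | p.eval x = 0} = 0 := hfin.measure_zero _
    by_contra hcon
    push_neg at hcon
    have hz : volume {x : ℝ | p.eval x ≠ 0} = 0 := le_antisymm hcon zero_le
    have hcover : (Set.univ : Set ℝ) ⊆ {x : ℝ | p.eval x ≠ 0} ∪ {x : ℝ | p.eval x = 0} := by
      intro x _
      rcases ne_or_eq (p.eval x) 0 with h | h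
      · exact Or.inl h
      · exact Or.inr h
    have := (measure_mono hcover).trans (measure_union_le (μ := volume) _ _)
    rw [hz, h0, add_zero, Real.volume_univ] at this
    simp at this
  · refine fun x => ?_
    simp only [Pi.zero_apply]
    have := Real.exp_pos (-x ^ 4)
    nlinarith [mul_self_nonneg (p.eval x)]
  · exact integrable_F p p

lemma innerS_self_pos (l1 : ℝ) (hl1 : 0 ≤ l1) (p : Polynomial ℝ) (hp : p ≠ 0) :
    0 < innerS l1 0 p p := by
  rw [innerS_eq]
  have h1 := innerF_self_pos p hp
  nlinarith [mul_self_nonneg (p.eval 0)]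

lemma eq_zero_of_innerF_orth (p : Polynomial ℝ)
    (h : ∀ m ≤ p.natDegree, innerF p (X ^ m) = 0) : p = 0 := by
  by_contra hp
  have hpos := innerF_self_pos p hp
  have hz : innerF p p = 0 :=
    innerF_eq_zero_of_natDegree_lt p (p.natDegree + 1)
      (fun m hm => h m (Nat.lt_succ_iff.mp hm)) p (Nat.lt_succ_self _)
  linarith

lemma eq_zero_of_innerS_orth (l1 : ℝ) (hl1 : 0 ≤ l1) (p : Polynomial ℝ)
    (h : ∀ m ≤ p.natDegree, innerS l1 0 p (X ^ m) = 0) : p = 0 := by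
  by_contra hp
  have hpos := innerS_self_pos l1 hl1 p hp
  have hz : innerS l1 0 p p = 0 :=
    innerS_eq_zero_of_natDegree_lt l1 p (p.natDegree + 1)
      (fun m hm => h m (Nat.lt_succ_iff.mp hm)) p (Nat.lt_succ_self _)
  linarith

lemma innerF_comp_neg (f g : Polynomial ℝ) :
    innerF (f.comp (-X)) (g.comp (-X)) = innerF f g := by
  unfold innerF
  rw [← integral_neg_eq_self (fun x : ℝ => f.eval x * g.eval x * Real.exp (-x ^ 4)) volume]
  congr 1; funext x
  have h4 : (-x) ^ 4 = x ^ 4 := by ring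
  simp [Polynomial.eval_comp, h4]

lemma innerS_comp_neg (l1 : ℝ) (f g : Polynomial ℝ) :
    innerS l1 0 (f.comp (-X)) (g.comp (-X)) = innerS l1 0 f g := by
  rw [innerS_eq, innerS_eq, innerF_comp_neg]
  simp [Polynomial.eval_comp]

lemma Xpow_comp_neg (m : ℕ) :
    ((X : Polynomial ℝ) ^ m).comp (-X) = C ((-1 : ℝ) ^ m) * X ^ m := by
  rw [Polynomial.pow_comp, Polynomial.X_comp, neg_pow]
  simp [map_pow]

end Aux

section Parity

lemma monic_sub_aux (p q : Polynomial ℝ) (N : ℕ)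
    (hpne : p ≠ 0) (hdp : p.natDegree = N) (hdq : q.natDegree = N)
    (hlc : p.leadingCoeff = q.leadingCoeff) :
    p - q = 0 ∨ (p - q).natDegree < N := by
  rcases eq_or_ne (p - q) 0 with h | h
  · exact Or.inl h
  · right
    have hqne : q ≠ 0 := by
      intro hq0
      apply h
      rw [hq0, sub_zero]
      rw [hq0] at hlc
      simp only [Polynomial.leadingCoeff_zero] at hlc
      exact Polynomial.leadingCoeff_eq_zero.mp hlc
    have hdeg : p.degree = q.degree := by
      rw [Polynomial.degree_eq_natDegree hpne, Polynomial.degree_eq_natDegree hqne, hdp, hdq]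
    have := Polynomial.degree_sub_lt hdeg hpne hlc
    rw [Polynomial.degree_eq_natDegree hpne, hdp] at this
    exact (Polynomial.natDegree_lt_iff_degree_lt h).mpr this

lemma parity_F (p : Polynomial ℝ) (n : ℕ) (hmon : p.Monic) (hdeg : p.natDegree = n)
    (horth : ∀ m < n, innerF p (X ^ m) = 0) :
    p.comp (-X) = C ((-1 : ℝ) ^ n) * p := by
  have hcompdeg : (p.comp (-X)).natDegree = n := by
    rw [Polynomial.natDegree_comp, hdeg]
    simp
  have hX1 : (-X : Polynomial ℝ).natDegree = 1 := by simp
  have hclc : (p.comp (-X)).leadingCoeff = (-1 : ℝ) ^ n := by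
    rw [Polynomial.leadingCoeff_comp (by rw [hX1]; norm_num), hmon.leadingCoeff, one_mul,
      hdeg]
    simp
  have hcompne : p.comp (-X) ≠ 0 := by
    intro h0
    rw [h0, Polynomial.leadingCoeff_zero] at hclc
    have : ((-1 : ℝ) ^ n) ≠ 0 := pow_ne_zero n (by norm_num)
    exact this hclc.symm
  have hqdeg : (C ((-1 : ℝ) ^ n) * p).natDegree = n := by
    rw [Polynomial.natDegree_C_mul (pow_ne_zero n (by norm_num : (-1:ℝ) ≠ 0)), hdeg]
  have hqlc : (C ((-1 : ℝ) ^ n) * p).leadingCoeff = (-1 : ℝ) ^ n := by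
    rw [Polynomial.leadingCoeff_mul, Polynomial.leadingCoeff_C, hmon.leadingCoeff, mul_one]
  have hdorth : ∀ m < n, innerF (p.comp (-X) - C ((-1 : ℝ) ^ n) * p) (X ^ m) = 0 := by
    intro m hm
    have h2 := innerF_comp_neg p (X ^ m)
    rw [horth m hm, Xpow_comp_neg, innerF_Cmul_right] at h2
    have h3 : innerF (p.comp (-X)) (X ^ m) = 0 := by
      rcases mul_eq_zero.mp h2 with h | h
      · exact absurd h (pow_ne_zero m (by norm_num))
      · exact h
    rw [innerF_sub_left, h3, innerF_Cmul_left, horth m hm, mul_zero, sub_zero]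
  have hd0 : p.comp (-X) - C ((-1 : ℝ) ^ n) * p = 0 := by
    rcases monic_sub_aux (p.comp (-X)) (C ((-1 : ℝ) ^ n) * p) n hcompne hcompdeg hqdeg
        (hclc.trans hqlc.symm) with h | h
    · exact h
    · exact eq_zero_of_innerF_orth _ (fun m hm => hdorth m (lt_of_le_of_lt hm h))
  exact sub_eq_zero.mp hd0

lemma parity_S (l1 : ℝ) (hl1 : 0 ≤ l1) (p : Polynomial ℝ) (n : ℕ) (hmon : p.Monic)
    (hdeg : p.natDegree = n) (horth : ∀ m < n, innerS l1 0 p (X ^ m) = 0) :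
    p.comp (-X) = C ((-1 : ℝ) ^ n) * p := by
  have hcompdeg : (p.comp (-X)).natDegree = n := by
    rw [Polynomial.natDegree_comp, hdeg]
    simp
  have hX1 : (-X : Polynomial ℝ).natDegree = 1 := by simp
  have hclc : (p.comp (-X)).leadingCoeff = (-1 : ℝ) ^ n := by
    rw [Polynomial.leadingCoeff_comp (by rw [hX1]; norm_num), hmon.leadingCoeff, one_mul,
      hdeg]
    simp
  have hcompne : p.comp (-X) ≠ 0 := by
    intro h0
    rw [h0, Polynomial.leadingCoeff_zero] at hclc
    have : ((-1 : ℝ) ^ n) ≠ 0 := pow_ne_zero n (by norm_num)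
    exact this hclc.symm
  have hqdeg : (C ((-1 : ℝ) ^ n) * p).natDegree = n := by
    rw [Polynomial.natDegree_C_mul (pow_ne_zero n (by norm_num : (-1:ℝ) ≠ 0)), hdeg]
  have hqlc : (C ((-1 : ℝ) ^ n) * p).leadingCoeff = (-1 : ℝ) ^ n := by
    rw [Polynomial.leadingCoeff_mul, Polynomial.leadingCoeff_C, hmon.leadingCoeff, mul_one]
  have hdorth : ∀ m < n, innerS l1 0 (p.comp (-X) - C ((-1 : ℝ) ^ n) * p) (X ^ m) = 0 := by
    intro m hm
    have h2 := innerS_comp_neg l1 p (X ^ m)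
    rw [horth m hm, Xpow_comp_neg, innerS_Cmul_right] at h2
    have h3 : innerS l1 0 (p.comp (-X)) (X ^ m) = 0 := by
      rcases mul_eq_zero.mp h2 with h | h
      · exact absurd h (pow_ne_zero m (by norm_num))
      · exact h
    rw [innerS_sub_left, h3, innerS_Cmul_left, horth m hm, mul_zero, sub_zero]
  have hd0 : p.comp (-X) - C ((-1 : ℝ) ^ n) * p = 0 := by
    rcases monic_sub_aux (p.comp (-X)) (C ((-1 : ℝ) ^ n) * p) n hcompne hcompdeg hqdeg
        (hclc.trans hqlc.symm) with h | h
    · exact h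
    · exact eq_zero_of_innerS_orth l1 hl1 _ (fun m hm => hdorth m (lt_of_le_of_lt hm h))
  exact sub_eq_zero.mp hd0

lemma innerF_odd_zero (p : Polynomial ℝ) (n m : ℕ)
    (hpar : p.comp (-X) = C ((-1 : ℝ) ^ n) * p) (hodd : Odd (n + m)) :
    innerF p (X ^ m) = 0 := by
  have h := innerF_comp_neg p (X ^ m)
  rw [hpar, Xpow_comp_neg, innerF_Cmul_right, innerF_Cmul_left, ← mul_assoc,
    ← pow_add] at h
  have hneg : ((-1 : ℝ)) ^ (m + n) = -1 := by
    rw [Nat.add_comm]; exact hodd.neg_one_pow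
  rw [hneg] at h
  linarith [h]

lemma innerS_odd_zero (l1 : ℝ) (p : Polynomial ℝ) (n m : ℕ)
    (hpar : p.comp (-X) = C ((-1 : ℝ) ^ n) * p) (hodd : Odd (n + m)) :
    innerS l1 0 p (X ^ m) = 0 := by
  have h := innerS_comp_neg l1 p (X ^ m)
  rw [hpar, Xpow_comp_neg, innerS_Cmul_right, innerS_Cmul_left, ← mul_assoc,
    ← pow_add] at h
  have hneg : ((-1 : ℝ)) ^ (m + n) = -1 := by
    rw [Nat.add_comm]; exact hodd.neg_one_pow
  rw [hneg] at h
  linarith [h]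

end Parity

lemma innerS_Xmul (l1 : ℝ) (p : Polynomial ℝ) (j : ℕ) :
    innerS l1 0 (X * p) (X ^ j) = innerF p (X ^ (j + 1)) := by
  rw [innerS_eq]
  simp only [Polynomial.eval_mul, Polynomial.eval_X, zero_mul, mul_zero, add_zero]
  unfold innerF
  congr 1; funext x
  simp only [Polynomial.eval_mul, Polynomial.eval_pow, Polynomial.eval_X]
  ring

/-- Case `λ₂ = 0`: the monic Freud polynomials `P n` and the monic Sobolev orthogonal
polynomials `Q n` are related by `x P_n = Q_{n+1} + a_n Q_{n-1}` for `n ≥ 1`,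
where `a n = k n / k̂ (n-1)`. -/
theorem sobolev_freud_connection_xP
    (l1 : ℝ) (hl1 : 0 ≤ l1)
    (P Q : ℕ → Polynomial ℝ) (k khat : ℕ → ℝ)
    (hPmonic : ∀ n, (P n).Monic) (hPdeg : ∀ n, (P n).natDegree = n)
    (hPorth : ∀ n m : ℕ, m < n → innerF (P n) (X ^ m) = 0)
    (hQmonic : ∀ n, (Q n).Monic) (hQdeg : ∀ n, (Q n).natDegree = n)
    (hQorth : ∀ n m : ℕ, m < n → innerS l1 0 (Q n) (X ^ m) = 0)
    (hk : ∀ n, k n = innerF (P n) (P n))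
    (hkhat : ∀ n, khat n = innerS l1 0 (Q n) (Q n))
    (a : ℕ → ℝ) (ha : ∀ n, a n = k n / khat (n - 1)) :
    ∀ n, 1 ≤ n → X * P n = Q (n + 1) + C (a n) * Q (n - 1) := by
  intro n hn
  obtain ⟨m, rfl⟩ : ∃ m, n = m + 1 := ⟨n - 1, (Nat.succ_pred_eq_of_pos hn).symm⟩
  simp only [Nat.add_sub_cancel]
  have hkhatpos : 0 < khat m := by
    rw [hkhat]
    exact innerS_self_pos l1 hl1 _ (hQmonic m).ne_zero
  have hak : a (m + 1) * khat m = k (m + 1) := by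
    rw [ha]
    simp only [Nat.add_sub_cancel]
    exact div_mul_cancel₀ _ hkhatpos.ne'
  have hPpar := parity_F (P (m + 1)) (m + 1) (hPmonic _) (hPdeg _) (fun j hj => hPorth _ j hj)
  have hQmpar := parity_S l1 hl1 (Q m) m (hQmonic _) (hQdeg _) (fun j hj => hQorth _ j hj)
  set R := X * P (m + 1) - Q (m + 2) - C (a (m + 1)) * Q m with hRdef
  have hXP : innerF (P (m + 1)) (X ^ (m + 1)) = k (m + 1) := by
    have hsum : (X : Polynomial ℝ) ^ (m + 1) = P (m + 1) + (X ^ (m + 1) - P (m + 1)) := by ring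
    rw [hsum, innerF_add_right, ← hk]
    have hz : innerF (P (m + 1)) (X ^ (m + 1) - P (m + 1)) = 0 := by
      rcases monic_sub_aux (X ^ (m + 1)) (P (m + 1)) (m + 1)
          (Polynomial.monic_X_pow _).ne_zero (Polynomial.natDegree_X_pow _) (hPdeg _)
          ((Polynomial.monic_X_pow _).leadingCoeff.trans (hPmonic _).leadingCoeff.symm)
          with h | h
      · rw [h, innerF_zero_right]
      · exact innerF_eq_zero_of_natDegree_lt _ (m + 1) (fun i hi => hPorth _ i hi) _ h
    rw [hz, add_zero]
  have hQm : innerS l1 0 (Q m) (X ^ m) = khat m := by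
    have hsum : (X : Polynomial ℝ) ^ m = Q m + (X ^ m - Q m) := by ring
    conv_lhs => rw [hsum]
    rw [innerS_add_right, ← hkhat]
    have hz : innerS l1 0 (Q m) (X ^ m - Q m) = 0 := by
      rcases monic_sub_aux (X ^ m) (Q m) m
          (Polynomial.monic_X_pow _).ne_zero (Polynomial.natDegree_X_pow _) (hQdeg _)
          ((Polynomial.monic_X_pow _).leadingCoeff.trans (hQmonic _).leadingCoeff.symm)
          with h | h
      · rw [h, innerS_zero_right]
      · exact innerS_eq_zero_of_natDegree_lt l1 _ m (fun i hi => hQorth _ i hi) _ h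
    rw [hz, add_zero]
  have hRorth : ∀ j ≤ m + 1, innerS l1 0 R (X ^ j) = 0 := by
    intro j hj
    rw [hRdef, innerS_sub_left, innerS_sub_left, innerS_Cmul_left, innerS_Xmul]
    have hQ2 : innerS l1 0 (Q (m + 2)) (X ^ j) = 0 := hQorth _ j (by omega)
    have hcase : j = m ∨ j = m + 1 ∨ j < m := by omega
    rcases hcase with rfl | rfl | hlt
    · rw [hXP, hQ2, hQm]
      linarith [hak]
    · have h1 : innerF (P (m + 1)) (X ^ (m + 1 + 1)) = 0 :=
        innerF_odd_zero _ (m + 1) (m + 2) hPpar ⟨m + 1, by ring⟩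
      have h2 : innerS l1 0 (Q m) (X ^ (m + 1)) = 0 :=
        innerS_odd_zero l1 _ m (m + 1) hQmpar ⟨m, by ring⟩
      rw [h1, hQ2, h2]
      ring
    · rw [hPorth _ (j + 1) (by omega), hQorth _ j hlt, hQ2]
      ring
  have hXPmon : (X * P (m + 1)).Monic := (Polynomial.monic_X).mul (hPmonic _)
  have hXPdeg : (X * P (m + 1)).natDegree = m + 2 := by
    rw [Polynomial.natDegree_mul Polynomial.X_ne_zero (hPmonic _).ne_zero,
      Polynomial.natDegree_X, hPdeg]
    omega
  have hA : (X * P (m + 1) - Q (m + 2)).natDegree ≤ m + 1 := by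
    rcases monic_sub_aux (X * P (m + 1)) (Q (m + 2)) (m + 2) hXPmon.ne_zero hXPdeg (hQdeg _)
        (hXPmon.leadingCoeff.trans (hQmonic _).leadingCoeff.symm) with h | h
    · rw [h]; simp
    · omega
  have hB : (C (a (m + 1)) * Q m).natDegree ≤ m :=
    le_trans (Polynomial.natDegree_C_mul_le _ _) (le_of_eq (hQdeg m))
  have hRd : R.natDegree ≤ m + 1 :=
    le_trans (Polynomial.natDegree_sub_le _ _) (max_le hA (hB.trans (Nat.le_succ m)))
  have hR0 : R = 0 :=
    eq_zero_of_innerS_orth l1 hl1 R (fun j hj => hRorth j (le_trans hj hRd))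
  have hfin : X * P (m + 1) - Q (m + 2) - C (a (m + 1)) * Q m = 0 := hRdef ▸ hR0
  linear_combination hfin
end
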